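/- If p is sampled uniformly at random from a nonempty finite set A ⊆ ℝ^d, then E[φ_A(p)] ≤ 2·φ_A(μ_A). -/

import Mathlib

open scoped BigOperators

/-- Lemma 3.1 of Arthur–Vassilvitskii: sampling p uniformly from A gives
    E[φ_A(p)] ≤ 2 φ_A(μ_A). -/
theorem uniform_sample_two_approx (d : ℕ) (A : Finset (EuclideanSpace ℝ (Fin d)))
    (hA : A.Nonempty) :
    (A.card : ℝ)⁻¹ * ∑ p ∈ A, ∑ a ∈ A, ‖a - p‖ ^ 2
      ≤ 2 * ∑ a ∈ A, ‖a - (A.card : ℝ)⁻¹ • ∑ x ∈ A, x‖ ^ 2 := by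
  have hn0 : (A.card : ℝ) ≠ 0 := by
    exact_mod_cast Finset.card_ne_zero_of_mem hA.choose_spec
  set μ : EuclideanSpace ℝ (Fin d) := (A.card : ℝ)⁻¹ • ∑ x ∈ A, x with hμ
  have hsum : ∑ a ∈ A, (a - μ) = 0 := by
    rw [Finset.sum_sub_distrib, Finset.sum_const, hμ, ← Nat.cast_smul_eq_nsmul ℝ,
      smul_smul, mul_inv_cancel₀ hn0, one_smul, sub_self]
  have key : ∀ c : EuclideanSpace ℝ (Fin d),
      ∑ a ∈ A, ‖a - c‖ ^ 2
        = ∑ a ∈ A, ‖a - μ‖ ^ 2 + (A.card : ℝ) * ‖μ - c‖ ^ 2 := by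
    intro c
    have h1 : ∀ a : EuclideanSpace ℝ (Fin d),
        ‖a - c‖ ^ 2 = ‖a - μ‖ ^ 2 + 2 * (inner ℝ (a - μ) (μ - c) : ℝ) + ‖μ - c‖ ^ 2 := by
      intro a
      rw [show a - c = (a - μ) + (μ - c) by abel, norm_add_sq_real]
    calc ∑ a ∈ A, ‖a - c‖ ^ 2
        = ∑ a ∈ A, (‖a - μ‖ ^ 2 + 2 * (inner ℝ (a - μ) (μ - c) : ℝ) + ‖μ - c‖ ^ 2) := by
          exact Finset.sum_congr rfl fun a _ => h1 a
      _ = ∑ a ∈ A, ‖a - μ‖ ^ 2 + 2 * (inner ℝ (∑ a ∈ A, (a - μ)) (μ - c) : ℝ)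
            + (A.card : ℝ) * ‖μ - c‖ ^ 2 := by
          rw [Finset.sum_add_distrib, Finset.sum_add_distrib, ← Finset.mul_sum,
            ← sum_inner, Finset.sum_const, nsmul_eq_mul]
      _ = ∑ a ∈ A, ‖a - μ‖ ^ 2 + (A.card : ℝ) * ‖μ - c‖ ^ 2 := by
          rw [hsum, inner_zero_left]; ring
  have hrev : ∀ p : EuclideanSpace ℝ (Fin d), ‖μ - p‖ = ‖p - μ‖ := fun p => norm_sub_rev _ _
  have htot : ∑ p ∈ A, ∑ a ∈ A, ‖a - p‖ ^ 2
      = 2 * (A.card : ℝ) * ∑ a ∈ A, ‖a - μ‖ ^ 2 := by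
    calc ∑ p ∈ A, ∑ a ∈ A, ‖a - p‖ ^ 2
        = ∑ p ∈ A, (∑ a ∈ A, ‖a - μ‖ ^ 2 + (A.card : ℝ) * ‖μ - p‖ ^ 2) :=
          Finset.sum_congr rfl fun p _ => key p
      _ = (A.card : ℝ) * ∑ a ∈ A, ‖a - μ‖ ^ 2
            + (A.card : ℝ) * ∑ p ∈ A, ‖p - μ‖ ^ 2 := by
          rw [Finset.sum_add_distrib, Finset.sum_const, nsmul_eq_mul, ← Finset.mul_sum]
          simp_rw [hrev]
      _ = 2 * (A.card : ℝ) * ∑ a ∈ A, ‖a - μ‖ ^ 2 := by ring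
  rw [htot]
  rw [show (A.card : ℝ)⁻¹ * (2 * (A.card : ℝ) * ∑ a ∈ A, ‖a - μ‖ ^ 2)
      = 2 * ∑ a ∈ A, ‖a - μ‖ ^ 2 by field_simp]
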